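/- (Achievability, noisy, finite-length bound.) Let q be a prime, n ≥ 1, d ≥ 2, r ≥ 0, m ≥ 1, ε ∈ [0,1], and let T* be a fixed (n;d)-tensor over 𝔽_q of rank at most r. Let M^{(1)},…,M^{(m)} be i.i.d. uniform (n;d)-tensors over 𝔽_q, y = y_{T*}, and ỹ = y + z with q-ary symmetric noise z of error probability ε independent of the M^{(k)}'s. Let τ be an integer with m·ε ≤ τ ≤ m·(q−1)/q, and let E be the event that d_H(y, ỹ) > τ or that some tensor T ≠ T* of rank at most r satisfies d_H(y_T, ỹ) ≤ τ. Then Pr(E) ≤ exp( −2·(τ − m·ε)²/m ) + q^{n·r·d} · exp( −2·( m(q−1)/q − τ )²/m ). -/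

import Mathlib

open scoped Classical

/-- An `(n;d)`-tensor over `𝔽_q`: a map `[n]^d → 𝔽_q`. -/
abbrev Tensor (q n d : ℕ) := (Fin d → Fin n) → ZMod q

/-- `T` has rank at most `r` if it is a sum of `r` outer products of vectors. -/
def rankLE (q n d r : ℕ) (T : Tensor q n d) : Prop :=
  ∃ u : Fin r → Fin d → (Fin n → ZMod q),
    ∀ idx : Fin d → Fin n, T idx = ∑ i : Fin r, ∏ j : Fin d, u i j (idx j)

/-- The tensor inner product `⟨M, T⟩ = Σ_idx M(idx)·T(idx)`. -/
def tinner {q n d : ℕ} [Fact q.Prime] (M T : Tensor q n d) : ZMod q :=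
  ∑ idx : Fin d → Fin n, M idx * T idx

/-- Probability weight of a noise symbol of the `q`-ary symmetric channel with error
probability `ε`. -/
noncomputable def noiseW (q : ℕ) [Fact q.Prime] (ε : ℝ) (z : ZMod q) : ℝ :=
  if z = 0 then 1 - ε else ε / ((q : ℝ) - 1)

section Aux
open Real Finset

lemma hoeffding_bernoulli (p : ℝ) (hp0 : 0 ≤ p) (hp1 : p ≤ 1) (x : ℝ) (hx : 0 ≤ x) :
    1 - p + p * Real.exp x ≤ Real.exp (p * x + x ^ 2 / 8) := by
  -- positivity of g t := 1 - p + p * exp t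
  have hgpos : ∀ t : ℝ, 0 < 1 - p + p * Real.exp t := by
    intro t
    rcases eq_or_lt_of_le hp0 with h | h
    · simp [← h]
    · have := Real.exp_pos t
      nlinarith
  set f : ℝ → ℝ := fun t => p * t + t ^ 2 / 8 - Real.log (1 - p + p * Real.exp t) with hf
  set f' : ℝ → ℝ := fun t => p + t / 4 - p * Real.exp t / (1 - p + p * Real.exp t) with hf'
  set f'' : ℝ → ℝ := fun t =>
    1 / 4 - p * Real.exp t * (1 - p) / (1 - p + p * Real.exp t) ^ 2 with hf''
  have hg : ∀ t : ℝ, HasDerivAt (fun t => 1 - p + p * Real.exp t) (p * Real.exp t) t := by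
    intro t
    simpa using ((Real.hasDerivAt_exp t).const_mul p).const_add (1 - p)
  have hdf : ∀ t : ℝ, HasDerivAt f (f' t) t := by
    intro t
    have h1 : HasDerivAt (fun t : ℝ => p * t + t ^ 2 / 8) (p + t * 2 / 8) t := by
      have := ((hasDerivAt_id t).const_mul p).add
        (((hasDerivAt_pow 2 t)).div_const 8)
      exact this.congr_deriv (by norm_num; ring)
    have h2 : HasDerivAt (fun t => Real.log (1 - p + p * Real.exp t))
        (p * Real.exp t / (1 - p + p * Real.exp t)) t :=
      (hg t).log (hgpos t).ne'
    have := h1.sub h2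
    exact this.congr_deriv (by ring)
  have hdf' : ∀ t : ℝ, HasDerivAt f' (f'' t) t := by
    intro t
    have h1 : HasDerivAt (fun t : ℝ => p + t / 4) (1 / 4) t := by
      simpa using ((hasDerivAt_id t).div_const 4).const_add p
    have h2 : HasDerivAt (fun t => p * Real.exp t / (1 - p + p * Real.exp t))
        ((p * Real.exp t * (1 - p + p * Real.exp t) - p * Real.exp t * (p * Real.exp t)) /
          (1 - p + p * Real.exp t) ^ 2) t :=
      ((Real.hasDerivAt_exp t).const_mul p).div (hg t) (hgpos t).ne'
    have := h1.sub h2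
    exact this.congr_deriv (by simp only [hf'']; ring)
  have hf''nonneg : ∀ t : ℝ, 0 ≤ f'' t := by
    intro t
    rw [hf'']
    have h := hgpos t
    rw [sub_nonneg, div_le_div_iff₀ (by positivity) (by norm_num : (0:ℝ) < 4)]
    nlinarith [sq_nonneg (1 - p - p * Real.exp t), Real.exp_pos t]
  -- f' is monotone
  have hmono' : Monotone f' := by
    apply monotone_of_deriv_nonneg
    · exact fun t => (hdf' t).differentiableAt
    · intro t
      rw [(hdf' t).deriv]
      exact hf''nonneg t
  have hf'0 : f' 0 = 0 := by
    simp [hf']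
  have hf'nonneg : ∀ t : ℝ, 0 ≤ t → 0 ≤ f' t := by
    intro t ht
    rw [← hf'0]
    exact hmono' ht
  have hmono : MonotoneOn f (Set.Ici (0:ℝ)) := by
    apply monotoneOn_of_deriv_nonneg (convex_Ici 0)
    · exact (fun t _ => (hdf t).differentiableAt.continuousAt.continuousWithinAt)
    · intro t ht
      exact ((hdf t).differentiableAt).differentiableWithinAt
    · intro t ht
      rw [interior_Ici] at ht
      rw [(hdf t).deriv]
      exact hf'nonneg t ht.le
  have hf0 : f 0 = 0 := by simp [hf]
  have := hmono (Set.self_mem_Ici) (Set.mem_Ici.mpr hx) hx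
  rw [hf0, hf] at this
  simp only [sub_nonneg] at this
  calc 1 - p + p * Real.exp x = Real.exp (Real.log (1 - p + p * Real.exp x)) := by
        rw [Real.exp_log (hgpos x)]
    _ ≤ Real.exp (p * x + x ^ 2 / 8) := Real.exp_le_exp.mpr (by linarith)

lemma chernoff_count {Ω : Type*} [Fintype Ω] (m : ℕ) (hm : 1 ≤ m)
    (w : Ω → ℝ) (hw : ∀ x, 0 ≤ w x) (hw1 : ∑ x, w x = 1)
    (A : Ω → Prop) [DecidablePred A] (p : ℝ) (hp : ∑ x, (if A x then w x else 0) = p)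
    (s : ℝ) (hs : (m : ℝ) * p ≤ s) :
    ∑ ω : Fin m → Ω, (∏ k, w (ω k)) *
        (if s ≤ (({k | A (ω k)} : Finset (Fin m)).card : ℝ) then 1 else 0)
      ≤ Real.exp (-2 * (s - m * p) ^ 2 / m) := by
  have hmpos : (0:ℝ) < m := by exact_mod_cast hm
  have hp0 : 0 ≤ p := by
    rw [← hp]; exact Finset.sum_nonneg fun x _ => by split <;> simp [hw]
  have hp1 : p ≤ 1 := by
    rw [← hp, ← hw1]
    exact Finset.sum_le_sum fun x _ => by split <;> simp [hw]
  set lam : ℝ := 4 * (s - m * p) / m with hlam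
  have hlam0 : 0 ≤ lam := by
    apply div_nonneg _ hmpos.le
    linarith
  -- indicator bound
  have step1 : ∀ ω : Fin m → Ω,
      (∏ k, w (ω k)) * (if s ≤ (({k | A (ω k)} : Finset (Fin m)).card : ℝ) then 1 else 0)
        ≤ (∏ k, w (ω k) * Real.exp (lam * (if A (ω k) then 1 else 0))) * Real.exp (-(lam * s)) := by
    intro ω
    have hcount : (({k | A (ω k)} : Finset (Fin m)).card : ℝ)
        = ∑ k, (if A (ω k) then (1:ℝ) else 0) := by
      rw [Finset.card_filter]
      push_cast
      rfl
    have hprodw : (0:ℝ) ≤ ∏ k, w (ω k) := Finset.prod_nonneg fun k _ => hw _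
    rw [Finset.prod_mul_distrib, mul_assoc, ← Real.exp_sum, ← Real.exp_add]
    apply mul_le_mul_of_nonneg_left _ hprodw
    split
    · rename_i h
      rw [hcount] at h
      have : (0:ℝ) ≤ ∑ k, lam * (if A (ω k) then (1:ℝ) else 0) + -(lam * s) := by
        rw [← Finset.mul_sum]
        nlinarith
      calc (1:ℝ) = Real.exp 0 := by simp
        _ ≤ _ := Real.exp_le_exp.mpr this
    · exact (Real.exp_pos _).le
  calc ∑ ω : Fin m → Ω, (∏ k, w (ω k)) *
        (if s ≤ (({k | A (ω k)} : Finset (Fin m)).card : ℝ) then 1 else 0)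
      ≤ ∑ ω : Fin m → Ω,
          (∏ k, w (ω k) * Real.exp (lam * (if A (ω k) then 1 else 0))) * Real.exp (-(lam * s)) :=
        Finset.sum_le_sum fun ω _ => step1 ω
    _ = (∑ x, w x * Real.exp (lam * (if A x then 1 else 0))) ^ m * Real.exp (-(lam * s)) := by
        rw [← Finset.sum_mul, Fintype.sum_pow (fun x => w x * Real.exp (lam * (if A x then 1 else 0))) m]
    _ ≤ Real.exp (p * lam + lam ^ 2 / 8) ^ m * Real.exp (-(lam * s)) := by
        apply mul_le_mul_of_nonneg_right _ (Real.exp_pos _).le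
        apply pow_le_pow_left₀ (Finset.sum_nonneg fun x _ => mul_nonneg (hw x) (Real.exp_pos _).le)
        have hsum : ∑ x, w x * Real.exp (lam * (if A x then 1 else 0))
            = 1 - p + p * Real.exp lam := by
          have : ∀ x : Ω, w x * Real.exp (lam * (if A x then 1 else 0))
              = (if A x then w x * Real.exp lam else w x) := by
            intro x; split <;> simp
          rw [Finset.sum_congr rfl fun x _ => this x]
          rw [Finset.sum_ite]
          have hA : ∑ x ∈ Finset.univ.filter A, w x = p := by
            rw [← hp, Finset.sum_filter]
          have htot : ∑ x ∈ Finset.univ.filter A, w x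
              + ∑ x ∈ Finset.univ.filter (fun x => ¬ A x), w x = 1 := by
            rw [Finset.sum_filter_add_sum_filter_not]; exact hw1
          rw [← Finset.sum_mul, hA]
          linarith
        rw [hsum]
        exact hoeffding_bernoulli p hp0 hp1 lam hlam0
    _ = Real.exp (m * (p * lam + lam ^ 2 / 8) - lam * s) := by
        rw [← Real.exp_nat_mul, ← Real.exp_add]; ring_nf
    _ ≤ Real.exp (-2 * (s - m * p) ^ 2 / m) := by
        apply Real.exp_le_exp.mpr
        rw [hlam]
        have hmne : (m:ℝ) ≠ 0 := hmpos.ne'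
        apply le_of_eq
        field_simp
        ring

end Aux

section helpers

variable (q n d : ℕ) [Fact q.Prime]

lemma sum_pair {α β : Type*} [Fintype α] [Fintype β] (m : ℕ)
    (F : (Fin m → α) → (Fin m → β) → ℝ) :
    ∑ M : Fin m → α, ∑ z : Fin m → β, F M z
      = ∑ ω : Fin m → α × β, F (fun k => (ω k).1) (fun k => (ω k).2) := by
  rw [← Fintype.sum_prod_type']
  exact (Fintype.sum_equiv (Equiv.arrowProdEquivProdArrow (Fin m) (fun _ => α) (fun _ => β)) _ _ (fun ω => rfl)).symm

lemma noiseW_nonneg (ε : ℝ) (hε0 : 0 ≤ ε) (hε1 : ε ≤ 1) (z : ZMod q) :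
    0 ≤ noiseW q ε z := by
  have hq2 : 2 ≤ q := (Fact.out (p := q.Prime)).two_le
  have : (1:ℝ) ≤ (q:ℝ) - 1 := by
    have : (2:ℝ) ≤ (q:ℝ) := by exact_mod_cast hq2
    linarith
  unfold noiseW
  split
  · linarith
  · positivity

lemma noiseW_sum (ε : ℝ) : ∑ z : ZMod q, noiseW q ε z = 1 := by
  have hq2 : 2 ≤ q := (Fact.out (p := q.Prime)).two_le
  haveI : NeZero q := ⟨by omega⟩
  have hq1 : (1:ℝ) ≤ (q:ℝ) - 1 := by
    have : (2:ℝ) ≤ (q:ℝ) := by exact_mod_cast hq2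
    linarith
  unfold noiseW
  rw [Finset.sum_ite]
  have h0 : Finset.univ.filter (fun z : ZMod q => z = 0) = {0} := by
    ext z; simp
  have h1 : (Finset.univ.filter (fun z : ZMod q => ¬ z = 0)).card = q - 1 := by
    have := Finset.card_filter_add_card_filter_not
      (s := (Finset.univ : Finset (ZMod q))) (p := fun z => z = 0)
    rw [h0] at this
    simp only [Finset.card_singleton, Finset.card_univ, ZMod.card] at this
    omega
  rw [h0, Finset.sum_const, Finset.sum_const, h1]
  simp only [Finset.card_singleton, one_smul, nsmul_eq_mul]
  have hcast : ((q - 1 : ℕ) : ℝ) = (q:ℝ) - 1 := by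
    have : 1 ≤ q := by omega
    push_cast [this]
    ring
  rw [hcast]
  field_simp
  ring

lemma noiseW_sum_ne (ε : ℝ) : ∑ z : ZMod q, (if z ≠ 0 then noiseW q ε z else 0) = ε := by
  have hq2 : 2 ≤ q := (Fact.out (p := q.Prime)).two_le
  haveI : NeZero q := ⟨by omega⟩
  have hq1 : (1:ℝ) < (q:ℝ) := by
    have : (2:ℝ) ≤ (q:ℝ) := by exact_mod_cast hq2
    linarith
  have : ∀ z : ZMod q, (if z ≠ 0 then noiseW q ε z else 0)
      = (if z = 0 then 0 else ε / ((q:ℝ) - 1)) := by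
    intro z
    unfold noiseW
    by_cases h : z = 0 <;> simp [h]
  rw [Finset.sum_congr rfl fun z _ => this z, Finset.sum_ite]
  have h0 : Finset.univ.filter (fun z : ZMod q => z = 0) = {0} := by
    ext z; simp
  have h1 : (Finset.univ.filter (fun z : ZMod q => ¬ z = 0)).card = q - 1 := by
    have := Finset.card_filter_add_card_filter_not
      (s := (Finset.univ : Finset (ZMod q))) (p := fun z => z = 0)
    rw [h0] at this
    simp only [Finset.card_singleton, Finset.card_univ, ZMod.card] at this
    omega
  rw [Finset.sum_const, Finset.sum_const, h1]
  simp only [smul_zero, nsmul_eq_mul, zero_add]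
  have hcast : ((q - 1 : ℕ) : ℝ) = (q:ℝ) - 1 := by
    have : 1 ≤ q := by omega
    push_cast [this]
    ring
  rw [hcast, mul_comm, div_mul_cancel₀ _ (by linarith : (q:ℝ) - 1 ≠ 0)]

/-- all fibers of `a ↦ tinner a D` have the same size, for `D ≠ 0`. -/
lemma fiber_card_eq (D : Tensor q n d) (hD : D ≠ 0) (b : ZMod q) :
    (Finset.univ.filter (fun a : Tensor q n d => tinner a D = b)).card
      = (Finset.univ.filter (fun a : Tensor q n d => tinner a D = 0)).card := by
  obtain ⟨idx0, hidx0⟩ : ∃ idx0, D idx0 ≠ 0 := by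
    by_contra h
    push_neg at h
    exact hD (funext h)
  set e : Tensor q n d := fun idx => if idx = idx0 then b * (D idx0)⁻¹ else 0 with he
  have hte : tinner e D = b := by
    unfold tinner
    rw [Finset.sum_eq_single idx0]
    · simp only [he, if_pos rfl]
      rw [mul_assoc, inv_mul_cancel₀ hidx0, mul_one]
    · intro idx _ hne
      simp [he, hne]
    · simp
  apply Finset.card_bij' (fun a _ => a - e) (fun a _ => a + e)
  · intro a ha
    simp only [Finset.mem_filter, Finset.mem_univ, true_and] at ha ⊢
    have : tinner (a - e) D = tinner a D - tinner e D := by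
      unfold tinner
      rw [← Finset.sum_sub_distrib]
      congr 1; ext idx; simp [sub_mul]
    rw [this, ha, hte, sub_self]
  · intro a ha
    simp only [Finset.mem_filter, Finset.mem_univ, true_and] at ha ⊢
    have : tinner (a + e) D = tinner a D + tinner e D := by
      unfold tinner
      rw [← Finset.sum_add_distrib]
      congr 1; ext idx; simp [add_mul]
    rw [this, ha, hte, zero_add]
  · intro a _; simp
  · intro a _; simp

lemma card_partition (D : Tensor q n d) :
    Fintype.card (Tensor q n d)
      = ∑ b : ZMod q, (Finset.univ.filter (fun a : Tensor q n d => tinner a D = b)).card := by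
  rw [← Finset.card_univ]
  exact Finset.card_eq_sum_card_fiberwise (fun a _ => Finset.mem_univ (tinner a D))

lemma fiber_frac (D : Tensor q n d) (hD : D ≠ 0) (b : ZMod q) :
    ((Finset.univ.filter (fun a : Tensor q n d => tinner a D = b)).card : ℝ)
        / (Fintype.card (Tensor q n d) : ℝ) = 1 / q := by
  haveI : NeZero q := ⟨by have := (Fact.out (p := q.Prime)).two_le; omega⟩
  have hC : Fintype.card (Tensor q n d)
      = q * (Finset.univ.filter (fun a : Tensor q n d => tinner a D = 0)).card := by
    rw [card_partition q n d D]
    rw [Finset.sum_congr rfl fun b _ => fiber_card_eq q n d D hD b]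
    rw [Finset.sum_const, Finset.card_univ, ZMod.card, smul_eq_mul]
  have hCpos : 0 < Fintype.card (Tensor q n d) := Fintype.card_pos
  have hqR : (0:ℝ) < (q:ℝ) := by
    have := (Fact.out (p := q.Prime)).two_le
    have : (2:ℝ) ≤ (q:ℝ) := by exact_mod_cast this
    linarith
  have hN : 0 < (Finset.univ.filter (fun a : Tensor q n d => tinner a D = 0)).card := by
    apply Finset.card_pos.mpr
    refine ⟨0, ?_⟩
    exact Finset.mem_filter.mpr ⟨Finset.mem_univ _, by simp [tinner]⟩
  rw [fiber_card_eq q n d D hD b, hC]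
  push_cast
  rw [div_eq_div_iff (by positivity) hqR.ne']
  ring

end helpers

section main
variable (q n d : ℕ) [Fact q.Prime]

lemma ham_ne_zero (m : ℕ) (y z : Fin m → ZMod q) :
    hammingDist y (fun k => y k + z k) = ({k | z k ≠ 0} : Finset (Fin m)).card := by
  unfold hammingDist
  congr 1
  ext k
  simp

lemma ham_compl (m : ℕ) (f g : Fin m → ZMod q) :
    ({k | f k = g k} : Finset (Fin m)).card + hammingDist f g = m := by
  have h2 : hammingDist f g = (Finset.univ.filter (fun k => ¬ f k = g k)).card := by
    unfold hammingDist
    first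
    | rfl
    | (congr 1; ext k; simp)
  rw [h2]
  have := Finset.card_filter_add_card_filter_not
    (s := (Finset.univ : Finset (Fin m))) (p := fun k => f k = g k)
  simpa using this

lemma card_S_le (r : ℕ) (Tstar : Tensor q n d) :
    ((Finset.univ.filter
        (fun T : Tensor q n d => T ≠ Tstar ∧ rankLE q n d r T)).card : ℝ)
      ≤ (q:ℝ) ^ (n * r * d) := by
  haveI : NeZero q := ⟨by have := (Fact.out (p := q.Prime)).two_le; omega⟩
  set Φ : (Fin r → Fin d → Fin n → ZMod q) → Tensor q n d :=
    fun u => fun idx => ∑ i, ∏ j, u i j (idx j) with hΦ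
  have hsub : Finset.univ.filter (fun T : Tensor q n d => T ≠ Tstar ∧ rankLE q n d r T)
      ⊆ Finset.image Φ Finset.univ := by
    intro T hT
    simp only [Finset.mem_filter] at hT
    obtain ⟨u, hu⟩ := hT.2.2
    exact Finset.mem_image.mpr ⟨u, Finset.mem_univ u, (funext fun idx => (hu idx).symm)⟩
  have h1 := Finset.card_le_card hsub
  have h2 := Finset.card_image_le (s := (Finset.univ : Finset (Fin r → Fin d → Fin n → ZMod q)))
    (f := Φ)
  have h3 : Fintype.card (Fin r → Fin d → Fin n → ZMod q) = q ^ (n * r * d) := by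
    rw [Fintype.card_fun, Fintype.card_fun, Fintype.card_fun, ZMod.card,
      Fintype.card_fin, Fintype.card_fin, Fintype.card_fin, ← pow_mul, ← pow_mul]
    congr 1
    ring
  have : ((Finset.univ.filter
      (fun T : Tensor q n d => T ≠ Tstar ∧ rankLE q n d r T)).card : ℝ)
      ≤ (Fintype.card (Fin r → Fin d → Fin n → ZMod q) : ℝ) := by
    rw [Finset.card_univ] at h2
    exact_mod_cast le_trans h1 h2
  rw [h3] at this
  exact_mod_cast this

/-- **Achievability (noisy, finite-length bound).** For a fixed tensor `T*` of rank at
most `r`, i.i.d. uniform sensing tensors, `q`-ary symmetric noise `z` independent of them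
(`ỹ = y_{T*} + z`), and an integer threshold `τ` with `m·ε ≤ τ ≤ m(q−1)/q`, the
probability of the error event `E` — that `d_H(y_{T*}, ỹ) > τ` or some `T ≠ T*` of rank
at most `r` has `d_H(y_T, ỹ) ≤ τ` — satisfies
`Pr(E) ≤ exp(−2(τ − mε)²/m) + q^(n·r·d)·exp(−2(m(q−1)/q − τ)²/m)`. -/
theorem prob_error_noisy_le (q n d r m : ℕ) [Fact q.Prime]
    (hn : 1 ≤ n) (hd : 2 ≤ d) (hm : 1 ≤ m)
    (ε : ℝ) (hε0 : 0 ≤ ε) (hε1 : ε ≤ 1)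
    (Tstar : Tensor q n d) (hTstar : rankLE q n d r Tstar)
    (τ : ℕ) (hτ1 : m * ε ≤ (τ : ℝ)) (hτ2 : (τ : ℝ) ≤ m * ((q : ℝ) - 1) / q) :
    (∑ M : Fin m → Tensor q n d, ∑ z : Fin m → ZMod q,
        (∏ k, noiseW q ε (z k)) *
          (if (τ < hammingDist (fun k => tinner (M k) Tstar)
                  (fun k => tinner (M k) Tstar + z k) ∨
                ∃ T : Tensor q n d, T ≠ Tstar ∧ rankLE q n d r T ∧
                  hammingDist (fun k => tinner (M k) T)
                    (fun k => tinner (M k) Tstar + z k) ≤ τ)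
            then 1 else 0)) /
        (Fintype.card (Tensor q n d) : ℝ) ^ m
      ≤ Real.exp (-2 * ((τ : ℝ) - m * ε) ^ 2 / m) +
        (q : ℝ) ^ (n * r * d) * Real.exp (-2 * (m * ((q : ℝ) - 1) / q - (τ : ℝ)) ^ 2 / m) := by
  classical
  have hq2 : 2 ≤ q := (Fact.out (p := q.Prime)).two_le
  have hqR : (2:ℝ) ≤ (q:ℝ) := by exact_mod_cast hq2
  set C : ℝ := (Fintype.card (Tensor q n d) : ℝ) with hCdef
  have hC0 : 0 < C := by
    have : 0 < Fintype.card (Tensor q n d) := Fintype.card_pos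
    rw [hCdef]
    exact_mod_cast this
  set w : Tensor q n d × ZMod q → ℝ := fun x => noiseW q ε x.2 / C with hwdef
  have hw : ∀ x, 0 ≤ w x := fun x => div_nonneg (noiseW_nonneg q ε hε0 hε1 x.2) hC0.le
  have hw1 : ∑ x : Tensor q n d × ZMod q, w x = 1 := by
    rw [Fintype.sum_prod_type]
    have : ∀ a : Tensor q n d, ∑ b : ZMod q, w (a, b) = 1 / C := by
      intro a
      simp only [hwdef]
      rw [← Finset.sum_div, noiseW_sum]
    rw [Finset.sum_congr rfl fun a _ => this a, Finset.sum_const, Finset.card_univ,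
      nsmul_eq_mul, ← hCdef]
    field_simp
  -- indicator definitions
  set Ind : (Fin m → Tensor q n d) → (Fin m → ZMod q) → ℝ := fun M z =>
    (if (τ < hammingDist (fun k => tinner (M k) Tstar)
            (fun k => tinner (M k) Tstar + z k) ∨
          ∃ T : Tensor q n d, T ≠ Tstar ∧ rankLE q n d r T ∧
            hammingDist (fun k => tinner (M k) T)
              (fun k => tinner (M k) Tstar + z k) ≤ τ)
      then 1 else 0) with hInd
  set S : Finset (Tensor q n d) :=
    Finset.univ.filter (fun T => T ≠ Tstar ∧ rankLE q n d r T) with hS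
  set A1 : Tensor q n d × ZMod q → Prop := fun x => x.2 ≠ 0 with hA1
  set A2 : Tensor q n d → Tensor q n d × ZMod q → Prop :=
    fun T x => tinner x.1 T = tinner x.1 Tstar + x.2 with hA2
  set I1 : (Fin m → Tensor q n d × ZMod q) → ℝ := fun ω =>
    if (τ:ℝ) ≤ (({k | A1 (ω k)} : Finset (Fin m)).card : ℝ) then 1 else 0 with hI1
  set I2 : Tensor q n d → (Fin m → Tensor q n d × ZMod q) → ℝ := fun T ω =>
    if ((m:ℝ) - τ) ≤ (({k | A2 T (ω k)} : Finset (Fin m)).card : ℝ) then 1 else 0 with hI2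
  -- Step A : rewrite LHS over pair space
  have h1 : ∀ (M : Fin m → Tensor q n d) (z : Fin m → ZMod q),
      ((∏ k, noiseW q ε (z k)) * Ind M z) / C ^ m = (∏ k, w (M k, z k)) * Ind M z := by
    intro M z
    have hprod : (∏ k : Fin m, w (M k, z k)) = (∏ k, noiseW q ε (z k)) / C ^ m := by
      simp only [hwdef]
      rw [Finset.prod_div_distrib, Finset.prod_const, Finset.card_univ, Fintype.card_fin]
    rw [hprod]
    exact mul_div_right_comm _ _ _
  have stepA : (∑ M : Fin m → Tensor q n d, ∑ z : Fin m → ZMod q,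
      (∏ k, noiseW q ε (z k)) * Ind M z) / C ^ m
      = ∑ ω : Fin m → Tensor q n d × ZMod q,
          (∏ k, w (ω k)) * Ind (fun k => (ω k).1) (fun k => (ω k).2) := by
    calc (∑ M : Fin m → Tensor q n d, ∑ z : Fin m → ZMod q,
        (∏ k, noiseW q ε (z k)) * Ind M z) / C ^ m
        = ∑ M : Fin m → Tensor q n d, ∑ z : Fin m → ZMod q,
            ((∏ k, noiseW q ε (z k)) * Ind M z) / C ^ m := by
          rw [Finset.sum_div]
          exact Finset.sum_congr rfl fun M _ => Finset.sum_div _ _ _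
      _ = ∑ M : Fin m → Tensor q n d, ∑ z : Fin m → ZMod q,
            (∏ k, w (M k, z k)) * Ind M z :=
          Finset.sum_congr rfl fun M _ => Finset.sum_congr rfl fun z _ => h1 M z
      _ = _ := sum_pair m (fun M z => (∏ k, w (M k, z k)) * Ind M z)
  -- Step B : pointwise indicator bound
  have hI1nn : ∀ ω, 0 ≤ I1 ω := by
    intro ω; rw [hI1]; dsimp only; split <;> norm_num
  have hI2nn : ∀ T ω, 0 ≤ I2 T ω := by
    intro T ω; rw [hI2]; dsimp only; split <;> norm_num
  have stepB : ∀ ω : Fin m → Tensor q n d × ZMod q,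
      Ind (fun k => (ω k).1) (fun k => (ω k).2) ≤ I1 ω + ∑ T ∈ S, I2 T ω := by
    intro ω
    have hsumnn : (0:ℝ) ≤ ∑ T ∈ S, I2 T ω :=
      Finset.sum_nonneg fun T _ => hI2nn T ω
    rw [hInd]
    dsimp only
    split
    · rename_i h
      rcases h with h | ⟨T, hne, hrank, hdist⟩
      · have hI1one : I1 ω = 1 := by
          rw [hI1]
          dsimp only
          rw [if_pos]
          rw [ham_ne_zero q m (fun k => tinner ((ω k).1) Tstar) (fun k => (ω k).2)] at h
          have hset : ({k | (fun k => (ω k).2) k ≠ 0} : Finset (Fin m))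
              = ({k | A1 (ω k)} : Finset (Fin m)) := by
            ext k; simp [hA1]
          rw [hset] at h
          exact_mod_cast h.le
        linarith
      · have hTS : T ∈ S := by rw [hS]; simp [hne, hrank]
        have h1' : I2 T ω = 1 := by
          rw [hI2]
          dsimp only
          rw [if_pos]
          have hc := ham_compl q m (fun k => tinner ((ω k).1) T)
            (fun k => tinner ((ω k).1) Tstar + (ω k).2)
          have hset : ({k | (fun k => tinner ((ω k).1) T) k
                = (fun k => tinner ((ω k).1) Tstar + (ω k).2) k} : Finset (Fin m))
              = ({k | A2 T (ω k)} : Finset (Fin m)) := by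
            ext k; simp [hA2]
          rw [hset] at hc
          have hdm : hammingDist (fun k => tinner ((ω k).1) T)
              (fun k => tinner ((ω k).1) Tstar + (ω k).2) ≤ m := by omega
          have : (m:ℝ) - τ ≤ (m:ℝ) - hammingDist (fun k => tinner ((ω k).1) T)
              (fun k => tinner ((ω k).1) Tstar + (ω k).2) := by
            have : (hammingDist (fun k => tinner ((ω k).1) T)
                (fun k => tinner ((ω k).1) Tstar + (ω k).2) : ℝ) ≤ (τ:ℝ) := by
              exact_mod_cast hdist
            linarith
          calc ((m:ℝ) - τ) ≤ _ := this
            _ = (({k | A2 T (ω k)} : Finset (Fin m)).card : ℝ) := by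
              have := congrArg (fun x : ℕ => (x:ℝ)) hc
              push_cast at this
              linarith
        calc (1:ℝ) = I2 T ω := h1'.symm
          _ ≤ ∑ T ∈ S, I2 T ω := Finset.single_le_sum (fun T _ => hI2nn T ω) hTS
          _ ≤ I1 ω + ∑ T ∈ S, I2 T ω := by linarith [hI1nn ω]
    · exact add_nonneg (hI1nn ω) hsumnn
  -- Step C : sum the bound
  have hprodnn : ∀ ω : Fin m → Tensor q n d × ZMod q, (0:ℝ) ≤ ∏ k, w (ω k) :=
    fun ω => Finset.prod_nonneg fun k _ => hw _
  have stepC : ∑ ω : Fin m → Tensor q n d × ZMod q,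
      (∏ k, w (ω k)) * Ind (fun k => (ω k).1) (fun k => (ω k).2)
      ≤ (∑ ω : Fin m → Tensor q n d × ZMod q, (∏ k, w (ω k)) * I1 ω)
        + ∑ T ∈ S, ∑ ω : Fin m → Tensor q n d × ZMod q, (∏ k, w (ω k)) * I2 T ω := by
    calc ∑ ω : Fin m → Tensor q n d × ZMod q,
        (∏ k, w (ω k)) * Ind (fun k => (ω k).1) (fun k => (ω k).2)
        ≤ ∑ ω : Fin m → Tensor q n d × ZMod q,
            (∏ k, w (ω k)) * (I1 ω + ∑ T ∈ S, I2 T ω) :=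
          Finset.sum_le_sum fun ω _ =>
            mul_le_mul_of_nonneg_left (stepB ω) (hprodnn ω)
      _ = ∑ ω : Fin m → Tensor q n d × ZMod q,
            ((∏ k, w (ω k)) * I1 ω + ∑ T ∈ S, (∏ k, w (ω k)) * I2 T ω) := by
          exact Finset.sum_congr rfl fun ω _ => by rw [mul_add, Finset.mul_sum]
      _ = _ := by
          rw [Finset.sum_add_distrib]
          congr 1
          exact Finset.sum_comm
  -- first chernoff application
  have hpε : ∑ x : Tensor q n d × ZMod q, (if A1 x then w x else 0) = ε := by
    rw [Fintype.sum_prod_type]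
    have : ∀ a : Tensor q n d,
        ∑ b : ZMod q, (if A1 (a, b) then w (a, b) else 0) = ε / C := by
      intro a
      have : ∀ b : ZMod q, (if A1 (a, b) then w (a, b) else 0)
          = (if b ≠ 0 then noiseW q ε b else 0) / C := by
        intro b
        simp only [hA1, hwdef]
        split <;> simp
      rw [Finset.sum_congr rfl fun b _ => this b, ← Finset.sum_div, noiseW_sum_ne]
    rw [Finset.sum_congr rfl fun a _ => this a, Finset.sum_const, Finset.card_univ,
      nsmul_eq_mul, ← hCdef]
    field_simp
  have cher1 : ∑ ω : Fin m → Tensor q n d × ZMod q, (∏ k, w (ω k)) * I1 ω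
      ≤ Real.exp (-2 * ((τ:ℝ) - m * ε) ^ 2 / m) := by
    have := chernoff_count m hm w hw hw1 A1 ε hpε (τ:ℝ) hτ1
    exact this
  -- second chernoff application
  have hq0 : (0:ℝ) < (q:ℝ) := by linarith
  have hsτ : (m:ℝ) * (1 / q) ≤ (m:ℝ) - τ := by
    have key : (m:ℝ) * (((q:ℝ) - 1)) / q = (m:ℝ) - (m:ℝ) * (1 / q) := by
      field_simp
    rw [key] at hτ2
    linarith
  have hexpeq : Real.exp (-2 * (((m:ℝ) - τ) - m * (1 / q)) ^ 2 / m)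
      = Real.exp (-2 * ((m:ℝ) * ((q:ℝ) - 1) / q - (τ:ℝ)) ^ 2 / m) := by
    congr 2
    field_simp
    ring
  have cher2 : ∀ T ∈ S, ∑ ω : Fin m → Tensor q n d × ZMod q, (∏ k, w (ω k)) * I2 T ω
      ≤ Real.exp (-2 * ((m:ℝ) * ((q:ℝ) - 1) / q - (τ:ℝ)) ^ 2 / m) := by
    intro T hT
    rw [hS, Finset.mem_filter] at hT
    obtain ⟨-, hne, -⟩ := hT
    have hD : T - Tstar ≠ 0 := sub_ne_zero.mpr hne
    have hpT : ∑ x : Tensor q n d × ZMod q, (if A2 T x then w x else 0) = 1 / q := by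
      rw [Fintype.sum_prod_type_right]
      have inner : ∀ b : ZMod q,
          ∑ a : Tensor q n d, (if A2 T (a, b) then w (a, b) else 0)
            = noiseW q ε b * (1 / q) := by
        intro b
        have hcond : ∀ a : Tensor q n d, A2 T (a, b) ↔ tinner a (T - Tstar) = b := by
          intro a
          have hlin : tinner a (T - Tstar) = tinner a T - tinner a Tstar := by
            unfold tinner
            rw [← Finset.sum_sub_distrib]
            exact Finset.sum_congr rfl fun idx _ => by simp [Pi.sub_apply, mul_sub]
          rw [hA2]
          constructor
          · intro h; rw [hlin, h]; ring
          · intro h; rw [hlin] at h; linear_combination (h : _)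
        have : ∀ a : Tensor q n d, (if A2 T (a, b) then w (a, b) else 0)
            = (if tinner a (T - Tstar) = b then noiseW q ε b / C else 0) := by
          intro a
          simp only [hwdef]
          by_cases h : A2 T (a, b)
          · rw [if_pos h, if_pos ((hcond a).mp h)]
          · rw [if_neg h, if_neg (fun hh => h ((hcond a).mpr hh))]
        rw [Finset.sum_congr rfl fun a _ => this a, Finset.sum_ite, Finset.sum_const,
          Finset.sum_const, smul_zero, add_zero, nsmul_eq_mul]
        have hfib := fiber_frac q n d (T - Tstar) hD b
        rw [← hCdef] at hfib
        rw [← hfib]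
        ring
      rw [Finset.sum_congr rfl fun b _ => inner b, ← Finset.sum_mul, noiseW_sum, one_mul]
    have := chernoff_count m hm w hw hw1 (A2 T) (1/q) hpT ((m:ℝ) - τ) hsτ
    rw [hexpeq] at this
    exact this
  -- assemble
  have hsum2 : ∑ T ∈ S, ∑ ω : Fin m → Tensor q n d × ZMod q, (∏ k, w (ω k)) * I2 T ω
      ≤ (q:ℝ) ^ (n * r * d) *
        Real.exp (-2 * ((m:ℝ) * ((q:ℝ) - 1) / q - (τ:ℝ)) ^ 2 / m) := by
    calc ∑ T ∈ S, ∑ ω : Fin m → Tensor q n d × ZMod q, (∏ k, w (ω k)) * I2 T ω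
        ≤ ∑ _T ∈ S, Real.exp (-2 * ((m:ℝ) * ((q:ℝ) - 1) / q - (τ:ℝ)) ^ 2 / m) :=
          Finset.sum_le_sum cher2
      _ = (S.card : ℝ) * Real.exp (-2 * ((m:ℝ) * ((q:ℝ) - 1) / q - (τ:ℝ)) ^ 2 / m) := by
          rw [Finset.sum_const, nsmul_eq_mul]
      _ ≤ _ := by
          apply mul_le_mul_of_nonneg_right _ (Real.exp_pos _).le
          exact card_S_le q n d r Tstar
  calc (∑ M : Fin m → Tensor q n d, ∑ z : Fin m → ZMod q,
      (∏ k, noiseW q ε (z k)) * Ind M z) / C ^ m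
      = ∑ ω : Fin m → Tensor q n d × ZMod q,
          (∏ k, w (ω k)) * Ind (fun k => (ω k).1) (fun k => (ω k).2) := stepA
    _ ≤ (∑ ω : Fin m → Tensor q n d × ZMod q, (∏ k, w (ω k)) * I1 ω)
        + ∑ T ∈ S, ∑ ω : Fin m → Tensor q n d × ZMod q, (∏ k, w (ω k)) * I2 T ω := stepC
    _ ≤ _ := add_le_add cher1 hsum2

end main
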